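/- Fix integers c ≥ 2 and m ≥ 0, and define sequences M_1 = (m+1)·c, M_j = 2^{M_{j−1}} for j ≥ 2; M'_1 = m·c, M'_j = 2^{M'_{j−1}} for j ≥ 2; and N'_0 = c, N'_j = M'_j · 2^{N'_{j−1}} for j ≥ 1. Then M_i − M'_i ≥ N'_{i−1} for all i ≥ 1. -/

import Mathlib

private lemma key (a b : ℕ) : 2 ^ a + a * 2 ^ b + 1 ≤ 2 ^ (a + b + 1) := by
  have h1 : a + 1 ≤ 2 ^ a := Nat.lt_two_pow_self (n := a)
  have h2 : (1:ℕ) ≤ 2 ^ b := Nat.one_le_two_pow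
  have h3 : a * 2 ^ b + 2 ^ b ≤ 2 ^ a * 2 ^ b := by
    calc a * 2 ^ b + 2 ^ b = (a + 1) * 2 ^ b := by ring
      _ ≤ 2 ^ a * 2 ^ b := by gcongr
  have h4 : 2 ^ a ≤ 2 ^ a * 2 ^ b := Nat.le_mul_of_pos_right _ (by positivity)
  have h5 : 2 ^ (a + b + 1) = 2 ^ a * 2 ^ b + 2 ^ a * 2 ^ b := by ring
  omega

private lemma key2 (a b : ℕ) (hb : 2 ≤ b) (ha : a = 0 ∨ 2 ≤ a) :
    2 ^ a + a * 2 ^ b + 1 ≤ 2 ^ (a + b) := by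
  rcases ha with rfl | ha
  · simp only [pow_zero, zero_mul, zero_add]
    have : (2:ℕ) ^ 2 ≤ 2 ^ b := Nat.pow_le_pow_right (by norm_num) hb
    omega
  · obtain ⟨k, rfl⟩ : ∃ k, a = k + 2 := ⟨a - 2, by omega⟩
    obtain ⟨l, rfl⟩ : ∃ l, b = l + 2 := ⟨b - 2, by omega⟩
    have h1 : k + 2 ≤ 2 ^ (k + 1) := Nat.lt_two_pow_self (n := k + 1)
    have hmul : (k + 2) * 2 ^ (l + 2) ≤ 2 ^ (k + 1) * 2 ^ (l + 2) := by gcongr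
    have e1 : 2 ^ (k + 1) * 2 ^ (l + 2) = 2 ^ (k + l + 3) := by
      rw [← pow_add]; congr 1; omega
    have e2 : (2:ℕ) ^ (k + 2) ≤ 2 ^ (k + l + 3) := Nat.pow_le_pow_right (by norm_num) (by omega)
    have e3 : (1:ℕ) ≤ 2 ^ (k + l + 3) := Nat.one_le_two_pow
    have e4 : (2:ℕ) ^ (k + 2 + (l + 2)) = 2 ^ (k + l + 3) + 2 ^ (k + l + 3) := by
      rw [← two_mul, ← pow_succ']; congr 1; omega
    have e5 : (2:ℕ) ^ (k + 3) ≤ 2 ^ (k + l + 3) := Nat.pow_le_pow_right (by norm_num) (by omega)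
    have e6 : (2:ℕ) ^ (k + 3) = 2 ^ (k + 2) + 2 ^ (k + 2) := by ring
    have e7 : (1:ℕ) ≤ 2 ^ (k + 2) := Nat.one_le_two_pow
    omega

/-- **Lemma.** With `M₁ = (m+1)·c`, `M_{j+1} = 2^{M_j}`, `M'₁ = m·c`,
`M'_{j+1} = 2^{M'_j}`, `N'₀ = c`, `N'_{j+1} = M'_{j+1} · 2^{N'_j}` (for `c ≥ 2`),
we have `M_i - M'_i ≥ N'_{i-1}` for all `i ≥ 1`. -/
theorem M_minus_M'_ge_N' (c m : ℕ) (hc : 2 ≤ c)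
    (M M' N' : ℕ → ℕ)
    (hM1 : M 1 = (m + 1) * c) (hM : ∀ j, 1 ≤ j → M (j + 1) = 2 ^ M j)
    (hM'1 : M' 1 = m * c) (hM' : ∀ j, 1 ≤ j → M' (j + 1) = 2 ^ M' j)
    (hN'0 : N' 0 = c) (hN' : ∀ j, N' (j + 1) = M' (j + 1) * 2 ^ N' j) :
    ∀ i, 1 ≤ i → M' i + N' (i - 1) ≤ M i := by
  -- strengthened claim for i ≥ 2
  have strong : ∀ k, M' (k + 2) + N' (k + 1) + 1 ≤ M (k + 2) := by
    intro k
    induction k with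
    | zero =>
        have e1 : M' 2 = 2 ^ (m * c) := by
          have := hM' 1 le_rfl; rw [hM'1] at this; simpa using this
        have e2 : N' 1 = m * c * 2 ^ c := by
          have := hN' 0; rw [hM'1, hN'0] at this; simpa using this
        have e3 : M 2 = 2 ^ (m * c + c) := by
          have := hM 1 le_rfl; rw [hM1] at this
          simpa [add_mul, one_mul] using this
        rw [e1, e2, e3]
        refine key2 (m * c) c hc ?_
        rcases Nat.eq_zero_or_pos m with rfl | hm
        · left; simp
        · right
          have : 1 * c ≤ m * c := Nat.mul_le_mul_right c hm
          omega
    | succ n ih =>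
        have e1 : M' (n + 3) = 2 ^ M' (n + 2) := hM' (n + 2) (by omega)
        have e2 : N' (n + 2) = M' (n + 2) * 2 ^ N' (n + 1) := hN' (n + 1)
        have e3 : M (n + 3) = 2 ^ M (n + 2) := hM (n + 2) (by omega)
        rw [e1, e2, e3]
        calc 2 ^ M' (n + 2) + M' (n + 2) * 2 ^ N' (n + 1) + 1
            ≤ 2 ^ (M' (n + 2) + N' (n + 1) + 1) := key _ _
          _ ≤ 2 ^ M (n + 2) := Nat.pow_le_pow_right (by norm_num) ih
  intro i hi
  match i, hi with
  | 1, _ =>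
      show M' 1 + N' 0 ≤ M 1
      rw [hM'1, hN'0, hM1, add_mul, one_mul]
  | (k + 2), _ =>
      have := strong k
      simpa using this.trans' (by omega)
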